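/- Every polyomino with at least 5 cells contains a subset congruent to the straight tromino S_3 or a subset congruent to the S-tetromino Z_2. -/

import Mathlib

/-- A cell of the rectangular board. -/
abbrev Cell : Type := ℤ × ℤ

/-- Two cells are adjacent if they differ by (±1,0) or (0,±1). -/
def Adjacent (a b : Cell) : Prop :=
  (a.1 - b.1).natAbs + (a.2 - b.2).natAbs = 1

/-- A polyomino is a nonempty subset of ℤ² connected through adjacent cells. -/
def IsPolyomino (P : Set Cell) : Prop :=
  P.Nonempty ∧ ∀ a ∈ P, ∀ b ∈ P,
    Relation.ReflTransGen (fun x y => x ∈ P ∧ y ∈ P ∧ Adjacent x y) a b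

/-- Symmetries of the board: compositions of an integer translation with one of the
eight signed/swap linear maps (rotations by multiples of 90° and reflections). -/
def IsSym (f : Cell → Cell) : Prop :=
  ∃ (t : Cell) (a b s : Bool), ∀ p : Cell,
    f p = (t.1 + (if a then (if s then p.2 else p.1) else -(if s then p.2 else p.1)),
           t.2 + (if b then (if s then p.1 else p.2) else -(if s then p.1 else p.2)))

/-- Two subsets of ℤ² are congruent if one is the image of the other under a symmetry. -/
def BoardCongruent (A B : Set Cell) : Prop := ∃ f, IsSym f ∧ f '' A = B

/-- `Ancestor P Q` (written P ⊑ Q): `Q` contains a subset congruent to `P`. -/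
def Ancestor (P Q : Set Cell) : Prop := ∃ S, S ⊆ Q ∧ BoardCongruent P S

/-- `Simpler S T` (written S ⪯ T): every member of `T` has an ancestor in `S`. -/
def Simpler (S T : Set (Set Cell)) : Prop := ∀ Q ∈ T, ∃ P ∈ S, Ancestor P Q

/-- A team: a set of polyominoes no member of which is an ancestor of another member. -/
def IsTeam (F : Set (Set Cell)) : Prop :=
  (∀ P ∈ F, IsPolyomino P) ∧ ∀ P ∈ F, ∀ Q ∈ F, P ≠ Q → ¬ Ancestor P Q

/-- The cells marked so far, given the list of the maker's moves and
the list of the breaker's (pairs of) moves. -/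
def markedCells (ms : List Cell) (bs : List (Cell × Cell)) : Set Cell :=
  {c | c ∈ ms ∨ ∃ p ∈ bs, c = p.1 ∨ c = p.2}

/-- Maker strategy: from the maker's past moves and the breaker's past moves,
produce the maker's next mark. -/
abbrev MStrategy := List Cell → List (Cell × Cell) → Cell

/-- Breaker strategy: from the maker's moves so far (including his latest one) and the
breaker's past moves, produce the breaker's next two marks. -/
abbrev BStrategy := List Cell → List (Cell × Cell) → Cell × Cell

/-- A legal maker strategy always marks a previously unmarked cell. -/
def MLegal (σ : MStrategy) : Prop := ∀ ms bs, σ ms bs ∉ markedCells ms bs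

/-- A legal breaker strategy always marks two distinct previously unmarked cells. -/
def BLegal (τ : BStrategy) : Prop :=
  ∀ ms bs, (τ ms bs).1 ≠ (τ ms bs).2 ∧
    (τ ms bs).1 ∉ markedCells ms bs ∧ (τ ms bs).2 ∉ markedCells ms bs

/-- The lists of moves after `n` full rounds of the weak (1,2)-achievement game,
the maker moving first in each round. -/
def play (σ : MStrategy) (τ : BStrategy) : ℕ → List Cell × List (Cell × Cell)
  | 0 => ([], [])
  | n + 1 =>
      let p := play σ τ n
      let mv := σ p.1 p.2
      (p.1 ++ [mv], p.2 ++ [τ (p.1 ++ [mv]) p.2])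

/-- The set of cells marked by the maker during the first `n` rounds. -/
def makerSet (σ : MStrategy) (τ : BStrategy) (n : ℕ) : Set Cell :=
  {c | c ∈ (play σ τ n).1}

/-- The maker achieves `F` in the play of `σ` against `τ`: at some finite stage his
marked cells contain a subset congruent to a member of `F`. -/
def Achieves (F : Set (Set Cell)) (σ : MStrategy) (τ : BStrategy) : Prop :=
  ∃ n, ∃ Q ∈ F, Ancestor Q (makerSet σ τ n)

/-- A (bounded) set of polyominoes is a winner of the weak (1,2)-achievement game if the
maker has a legal strategy achieving it against every legal breaker strategy. -/
def GameWinner (F : Set (Set Cell)) : Prop :=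
  ∃ σ, MLegal σ ∧ ∀ τ, BLegal τ → Achieves F σ τ

/-- A set of polyominoes is bounded if all its members are finite. -/
def Bounded (F : Set (Set Cell)) : Prop := ∀ P ∈ F, P.Finite

/-- `G` is a bounded restriction of `T`: `G = {F_P : P ∈ T}` for a choice of a finite
polyomino ancestor `F_P ⊑ P` for each `P ∈ T`. -/
def BoundedRestriction (T G : Set (Set Cell)) : Prop :=
  ∃ f : Set Cell → Set Cell,
    (∀ P ∈ T, (f P).Finite ∧ IsPolyomino (f P) ∧ Ancestor (f P) P) ∧ G = f '' T

/-- Winner for a possibly unbounded set of polyominoes: a bounded set is a winner if the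
maker can achieve it; an unbounded set is a winner if every bounded restriction is. -/
def Winner (F : Set (Set Cell)) : Prop :=
  (Bounded F ∧ GameWinner F) ∨
  (¬ Bounded F ∧ ∀ G, BoundedRestriction F G → GameWinner G)

/-- The skinny polyomino `S_n`: `n` cells in a horizontal row. -/
def Srow (n : ℕ) : Set Cell := {p | 0 ≤ p.1 ∧ p.1 < (n : ℤ) ∧ p.2 = 0}

/-- The one-way infinite skinny polyomino `S_∞`. -/
def Sinf : Set Cell := {p | 0 ≤ p.1 ∧ p.2 = 0}

/-- The L-tromino `L_2`. -/
def L2 : Set Cell := {(0, 0), (1, 0), (1, 1)}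

/-- The L-tetromino `L_3`. -/
def L3 : Set Cell := {(0, 0), (1, 0), (2, 0), (2, 1)}

/-- The T-tetromino `T_2`. -/
def T2 : Set Cell := {(0, 0), (1, 0), (2, 0), (1, 1)}

/-- The 2×2 square tetromino `C_2`. -/
def C2 : Set Cell := {(0, 0), (1, 0), (0, 1), (1, 1)}

/-- The S-tetromino `Z_2`. -/
def Z2 : Set Cell := {(0, 0), (1, 0), (1, 1), (2, 1)}

/-- `C_n`: a horizontal row of `n` cells plus the cells above its two end cells. -/
def Cpoly (n : ℕ) : Set Cell :=
  {p | 0 ≤ p.1 ∧ p.1 < (n : ℤ) ∧ p.2 = 0} ∪ {(0, 1), ((n : ℤ) - 1, 1)}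

/-- `Z_n`: a horizontal row of `n` cells plus the cell above one end cell and the cell
below the other end cell. -/
def Zpoly (n : ℕ) : Set Cell :=
  {p | 0 ≤ p.1 ∧ p.1 < (n : ℤ) ∧ p.2 = 0} ∪ {(0, 1), ((n : ℤ) - 1, -1)}

/-- A polyomino is skinny if all its cells lie in one row or one column. -/
def Skinny (P : Set Cell) : Prop :=
  (∃ r, ∀ p ∈ P, p.2 = r) ∨ (∃ c, ∀ p ∈ P, p.1 = c)

/-- A 2-paving: an irreflexive symmetric relation on cells in which every cell is
related to at most two other cells. -/
def TwoPaving (R : Cell → Cell → Prop) : Prop :=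
  (∀ a, ¬ R a a) ∧ (∀ a b, R a b → R b a) ∧
  ∀ a, ∃ b c, ∀ d, R a d → d = b ∨ d = c

/-- The paving strategy based on `R`: a legal breaker strategy that marks every currently
unmarked cell related by `R` to the maker's last move. -/
def PavingStrategy (R : Cell → Cell → Prop) (τ : BStrategy) : Prop :=
  BLegal τ ∧ ∀ ms bs, ∀ last ∈ ms.getLast?, ∀ c, R last c →
    c ∉ markedCells ms bs → (c = (τ ms bs).1 ∨ c = (τ ms bs).2)

/-- `Q` is killed by `R`: every subset of ℤ² congruent to `Q` contains two related cells. -/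
def Killed (R : Cell → Cell → Prop) (Q : Set Cell) : Prop :=
  ∀ S : Set Cell, BoardCongruent Q S → ∃ a ∈ S, ∃ b ∈ S, R a b

/-- The unbounded team `W = {S_∞, T_2} ∪ {C_n : n ≥ 2} ∪ {Z_n : n ≥ 2}`. -/
def Wteam : Set (Set Cell) :=
  {Sinf, T2} ∪ {P | ∃ n, 2 ≤ n ∧ P = Cpoly n} ∪ {P | ∃ n, 2 ≤ n ∧ P = Zpoly n}


section Aux
variable {P : Set Cell}

lemma memeq {u v u' v' : ℤ} (h : (u,v) ∈ P) (h1 : u' = u) (h2 : v' = v) :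
    ((u',v') : Cell) ∈ P := by rw [h1, h2]; exact h

lemma anc_S3 (x y : ℤ) (h0 : ((x,y):Cell) ∈ P) (h1 : ((x+1,y):Cell) ∈ P)
    (h2 : ((x+2,y):Cell) ∈ P) : Ancestor (Srow 3) P := by
  refine ⟨(fun p => (x + p.1, y + p.2)) '' (Srow 3), ?_, fun p => (x + p.1, y + p.2),
    ⟨(x,y), true, true, false, fun p => rfl⟩, rfl⟩
  rintro q ⟨⟨p1,p2⟩, hp, rfl⟩
  simp only [Srow, Set.mem_setOf_eq] at hp
  obtain ⟨hA, hB, hC⟩ := hp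
  subst hC
  norm_num at hB
  interval_cases p1
  · exact memeq h0 (by norm_num) (by norm_num)
  · exact memeq h1 (by norm_num) (by norm_num)
  · exact memeq h2 (by norm_num) (by norm_num)

lemma anc_S3v (x y : ℤ) (h0 : ((x,y):Cell) ∈ P) (h1 : ((x,y+1):Cell) ∈ P)
    (h2 : ((x,y+2):Cell) ∈ P) : Ancestor (Srow 3) P := by
  refine ⟨(fun p => (x + p.2, y + p.1)) '' (Srow 3), ?_, fun p => (x + p.2, y + p.1),
    ⟨(x,y), true, true, true, fun p => rfl⟩, rfl⟩
  rintro q ⟨⟨p1,p2⟩, hp, rfl⟩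
  simp only [Srow, Set.mem_setOf_eq] at hp
  obtain ⟨hA, hB, hC⟩ := hp
  subst hC
  norm_num at hB
  interval_cases p1
  · exact memeq h0 (by norm_num) (by norm_num)
  · exact memeq h1 (by norm_num) (by norm_num)
  · exact memeq h2 (by norm_num) (by norm_num)

lemma anc_ZS (x y : ℤ) (h0 : ((x,y):Cell) ∈ P) (h1 : ((x+1,y):Cell) ∈ P)
    (h2 : ((x+1,y+1):Cell) ∈ P) (h3 : ((x+2,y+1):Cell) ∈ P) : Ancestor Z2 P := by
  refine ⟨(fun p => (x + p.1, y + p.2)) '' Z2, ?_, fun p => (x + p.1, y + p.2),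
    ⟨(x,y), true, true, false, fun p => rfl⟩, rfl⟩
  rintro q ⟨p, hp, rfl⟩
  simp only [Z2, Set.mem_insert_iff, Set.mem_singleton_iff] at hp
  rcases hp with rfl|rfl|rfl|rfl
  · exact memeq h0 (by norm_num) (by norm_num)
  · exact memeq h1 (by norm_num) (by norm_num)
  · exact memeq h2 (by norm_num) (by norm_num)
  · exact memeq h3 (by norm_num) (by norm_num)

lemma anc_ZZ (x y : ℤ) (h0 : ((x,y+1):Cell) ∈ P) (h1 : ((x+1,y+1):Cell) ∈ P)
    (h2 : ((x+1,y):Cell) ∈ P) (h3 : ((x+2,y):Cell) ∈ P) : Ancestor Z2 P := by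
  refine ⟨(fun p => (x + p.1, y + 1 + -p.2)) '' Z2, ?_, fun p => (x + p.1, y + 1 + -p.2),
    ⟨(x,y+1), true, false, false, fun p => rfl⟩, rfl⟩
  rintro q ⟨p, hp, rfl⟩
  simp only [Z2, Set.mem_insert_iff, Set.mem_singleton_iff] at hp
  rcases hp with rfl|rfl|rfl|rfl
  · exact memeq h0 (by norm_num) (by norm_num)
  · exact memeq h1 (by norm_num) (by norm_num)
  · exact memeq h2 (by norm_num) (by norm_num)
  · exact memeq h3 (by norm_num) (by norm_num)

lemma anc_ZSv (x y : ℤ) (h0 : ((x,y):Cell) ∈ P) (h1 : ((x,y+1):Cell) ∈ P)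
    (h2 : ((x+1,y+1):Cell) ∈ P) (h3 : ((x+1,y+2):Cell) ∈ P) : Ancestor Z2 P := by
  refine ⟨(fun p => (x + p.2, y + p.1)) '' Z2, ?_, fun p => (x + p.2, y + p.1),
    ⟨(x,y), true, true, true, fun p => rfl⟩, rfl⟩
  rintro q ⟨p, hp, rfl⟩
  simp only [Z2, Set.mem_insert_iff, Set.mem_singleton_iff] at hp
  rcases hp with rfl|rfl|rfl|rfl
  · exact memeq h0 (by norm_num) (by norm_num)
  · exact memeq h1 (by norm_num) (by norm_num)
  · exact memeq h2 (by norm_num) (by norm_num)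
  · exact memeq h3 (by norm_num) (by norm_num)

lemma anc_ZZv (x y : ℤ) (h0 : ((x+1,y):Cell) ∈ P) (h1 : ((x+1,y+1):Cell) ∈ P)
    (h2 : ((x,y+1):Cell) ∈ P) (h3 : ((x,y+2):Cell) ∈ P) : Ancestor Z2 P := by
  refine ⟨(fun p => (x + 1 + -p.2, y + p.1)) '' Z2, ?_, fun p => (x + 1 + -p.2, y + p.1),
    ⟨(x+1,y), false, true, true, fun p => rfl⟩, rfl⟩
  rintro q ⟨p, hp, rfl⟩
  simp only [Z2, Set.mem_insert_iff, Set.mem_singleton_iff] at hp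
  rcases hp with rfl|rfl|rfl|rfl
  · exact memeq h0 (by norm_num) (by norm_num)
  · exact memeq h1 (by norm_num) (by norm_num)
  · exact memeq h2 (by norm_num) (by norm_num)
  · exact memeq h3 (by norm_num) (by norm_num)

def S3Cond (a1 a2 b1 b2 c1 c2 : ℤ) : Prop :=
  (b1 = a1 + 1 ∧ b2 = a2 ∧ c1 = a1 + 2 ∧ c2 = a2) ∨
  (b1 = a1 ∧ b2 = a2 + 1 ∧ c1 = a1 ∧ c2 = a2 + 2) ∨
  (c1 = a1 + 1 ∧ c2 = a2 ∧ b1 = a1 + 2 ∧ b2 = a2) ∨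
  (c1 = a1 ∧ c2 = a2 + 1 ∧ b1 = a1 ∧ b2 = a2 + 2) ∨
  (a1 = b1 + 1 ∧ a2 = b2 ∧ c1 = b1 + 2 ∧ c2 = b2) ∨
  (a1 = b1 ∧ a2 = b2 + 1 ∧ c1 = b1 ∧ c2 = b2 + 2) ∨
  (c1 = b1 + 1 ∧ c2 = b2 ∧ a1 = b1 + 2 ∧ a2 = b2) ∨
  (c1 = b1 ∧ c2 = b2 + 1 ∧ a1 = b1 ∧ a2 = b2 + 2) ∨
  (a1 = c1 + 1 ∧ a2 = c2 ∧ b1 = c1 + 2 ∧ b2 = c2) ∨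
  (a1 = c1 ∧ a2 = c2 + 1 ∧ b1 = c1 ∧ b2 = c2 + 2) ∨
  (b1 = c1 + 1 ∧ b2 = c2 ∧ a1 = c1 + 2 ∧ a2 = c2) ∨
  (b1 = c1 ∧ b2 = c2 + 1 ∧ a1 = c1 ∧ a2 = c2 + 2)

def ZCond4 (a1 a2 b1 b2 c1 c2 d1 d2 : ℤ) : Prop :=
  (b1 = a1 + 1 ∧ b2 = a2 ∧ c1 = a1 + 1 ∧ c2 = a2 + 1 ∧ d1 = a1 + 2 ∧ d2 = a2 + 1) ∨
  (b1 = a1 + 1 ∧ b2 = a2 ∧ c1 = a1 + 1 ∧ c2 = a2 - 1 ∧ d1 = a1 + 2 ∧ d2 = a2 - 1) ∨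
  (b1 = a1 ∧ b2 = a2 + 1 ∧ c1 = a1 + 1 ∧ c2 = a2 + 1 ∧ d1 = a1 + 1 ∧ d2 = a2 + 2) ∨
  (b1 = a1 ∧ b2 = a2 + 1 ∧ c1 = a1 - 1 ∧ c2 = a2 + 1 ∧ d1 = a1 - 1 ∧ d2 = a2 + 2)

lemma killS3 (hS : ¬ Ancestor (Srow 3) P) :
    ∀ a1 a2 b1 b2 c1 c2 : ℤ, ((a1,a2):Cell) ∈ P → ((b1,b2):Cell) ∈ P → ((c1,c2):Cell) ∈ P →
    S3Cond a1 a2 b1 b2 c1 c2 → False := by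
  intro a1 a2 b1 b2 c1 c2 ha hb hc hcond
  unfold S3Cond at hcond
  rcases hcond with h|h|h|h|h|h|h|h|h|h|h|h
  · exact hS (anc_S3 a1 a2 ha (memeq hb (by omega) (by omega)) (memeq hc (by omega) (by omega)))
  · exact hS (anc_S3v a1 a2 ha (memeq hb (by omega) (by omega)) (memeq hc (by omega) (by omega)))
  · exact hS (anc_S3 a1 a2 ha (memeq hc (by omega) (by omega)) (memeq hb (by omega) (by omega)))
  · exact hS (anc_S3v a1 a2 ha (memeq hc (by omega) (by omega)) (memeq hb (by omega) (by omega)))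
  · exact hS (anc_S3 b1 b2 hb (memeq ha (by omega) (by omega)) (memeq hc (by omega) (by omega)))
  · exact hS (anc_S3v b1 b2 hb (memeq ha (by omega) (by omega)) (memeq hc (by omega) (by omega)))
  · exact hS (anc_S3 b1 b2 hb (memeq hc (by omega) (by omega)) (memeq ha (by omega) (by omega)))
  · exact hS (anc_S3v b1 b2 hb (memeq hc (by omega) (by omega)) (memeq ha (by omega) (by omega)))
  · exact hS (anc_S3 c1 c2 hc (memeq ha (by omega) (by omega)) (memeq hb (by omega) (by omega)))
  · exact hS (anc_S3v c1 c2 hc (memeq ha (by omega) (by omega)) (memeq hb (by omega) (by omega)))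
  · exact hS (anc_S3 c1 c2 hc (memeq hb (by omega) (by omega)) (memeq ha (by omega) (by omega)))
  · exact hS (anc_S3v c1 c2 hc (memeq hb (by omega) (by omega)) (memeq ha (by omega) (by omega)))

lemma killZ (hZ : ¬ Ancestor Z2 P) :
    ∀ a1 a2 b1 b2 c1 c2 d1 d2 : ℤ, ((a1,a2):Cell) ∈ P → ((b1,b2):Cell) ∈ P →
    ((c1,c2):Cell) ∈ P → ((d1,d2):Cell) ∈ P →
    ZCond4 a1 a2 b1 b2 c1 c2 d1 d2 → False := by
  intro a1 a2 b1 b2 c1 c2 d1 d2 ha hb hc hd hcond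
  unfold ZCond4 at hcond
  rcases hcond with h|h|h|h
  · exact hZ (anc_ZS a1 a2 (memeq ha (by omega) (by omega)) (memeq hb (by omega) (by omega)) (memeq hc (by omega) (by omega)) (memeq hd (by omega) (by omega)))
  · exact hZ (anc_ZZ a1 (a2 - 1) (memeq ha (by omega) (by omega)) (memeq hb (by omega) (by omega)) (memeq hc (by omega) (by omega)) (memeq hd (by omega) (by omega)))
  · exact hZ (anc_ZSv a1 a2 (memeq ha (by omega) (by omega)) (memeq hb (by omega) (by omega)) (memeq hc (by omega) (by omega)) (memeq hd (by omega) (by omega)))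
  · exact hZ (anc_ZZv (a1 - 1) a2 (memeq ha (by omega) (by omega)) (memeq hb (by omega) (by omega)) (memeq hc (by omega) (by omega)) (memeq hd (by omega) (by omega)))

lemma encard4 (p1 p2 p3 p4 : Cell) : ({p1,p2,p3,p4} : Set Cell).encard ≤ 4 := by
  calc ({p1,p2,p3,p4} : Set Cell).encard ≤ ({p2,p3,p4} : Set Cell).encard + 1 :=
        Set.encard_insert_le _ _
    _ ≤ (({p3,p4} : Set Cell).encard + 1) + 1 := by
        exact add_le_add_left (Set.encard_insert_le _ _) 1
    _ ≤ ((({p4} : Set Cell).encard + 1) + 1) + 1 := by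
        exact add_le_add_left (add_le_add_left (Set.encard_insert_le _ _) 1) 1
    _ ≤ 4 := by rw [Set.encard_singleton]; norm_num

set_option maxHeartbeats 1000000 in
lemma mainH (hP : IsPolyomino P)
    (N3 : ∀ a1 a2 b1 b2 c1 c2 : ℤ, ((a1,a2):Cell) ∈ P → ((b1,b2):Cell) ∈ P →
      ((c1,c2):Cell) ∈ P → S3Cond a1 a2 b1 b2 c1 c2 → False)
    (NZ : ∀ a1 a2 b1 b2 c1 c2 d1 d2 : ℤ, ((a1,a2):Cell) ∈ P → ((b1,b2):Cell) ∈ P →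
      ((c1,c2):Cell) ∈ P → ((d1,d2):Cell) ∈ P → ZCond4 a1 a2 b1 b2 c1 c2 d1 d2 → False)
    {x y : ℤ} (hX : ((x,y):Cell) ∈ P) (hX1 : ((x+1,y):Cell) ∈ P) : P.encard ≤ 4 := by
  have hbox : ∀ c ∈ P, ((c.1 = x ∨ c.1 = x + 1) ∧ y - 1 ≤ c.2 ∧ c.2 ≤ y + 1) := by
    intro c hc
    have hpath := hP.2 _ hX _ hc
    clear hc
    induction hpath with
    | refl => exact ⟨Or.inl rfl, by change y - 1 ≤ y; omega, by change y ≤ y + 1; omega⟩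
    | @tail b c hpa hstep ih =>
      obtain ⟨b1, b2⟩ := b
      obtain ⟨c1, c2⟩ := c
      obtain ⟨hb', hc', hadj⟩ := hstep
      have hadj' : (b1 - c1).natAbs + (b2 - c2).natAbs = 1 := hadj
      have ih1 : b1 = x ∨ b1 = x + 1 := ih.1
      have ih2 : y - 1 ≤ b2 := ih.2.1
      have ih3 : b2 ≤ y + 1 := ih.2.2
      show (c1 = x ∨ c1 = x + 1) ∧ y - 1 ≤ c2 ∧ c2 ≤ y + 1
      have h4 : (c1 = b1 + 1 ∧ c2 = b2) ∨ (c1 = b1 - 1 ∧ c2 = b2) ∨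
          (c1 = b1 ∧ c2 = b2 + 1) ∨ (c1 = b1 ∧ c2 = b2 - 1) := by omega
      have h3 : b2 = y - 1 ∨ b2 = y ∨ b2 = y + 1 := by omega
      clear hadj hadj' ih ih2 ih3 hpa
      rcases h4 with ⟨rfl,rfl⟩|⟨rfl,rfl⟩|⟨rfl,rfl⟩|⟨rfl,rfl⟩ <;>
        rcases ih1 with rfl|rfl <;> rcases h3 with rfl|rfl|rfl

      · refine ⟨?_, ?_, ?_⟩ <;> omega
      · refine ⟨?_, ?_, ?_⟩ <;> omega
      · refine ⟨?_, ?_, ?_⟩ <;> omega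
      · exact (NZ _ _ _ _ _ _ _ _ hX hX1 hb' hc' (by unfold ZCond4; exact Or.inr (Or.inl ⟨by omega, by omega, by omega, by omega, by omega, by omega⟩))).elim
      · exact (N3 _ _ _ _ _ _ hX hX1 hc' (by unfold S3Cond; exact Or.inl ⟨by omega, by omega, by omega, by omega⟩)).elim
      · exact (NZ _ _ _ _ _ _ _ _ hX hX1 hb' hc' (by unfold ZCond4; exact Or.inl ⟨by omega, by omega, by omega, by omega, by omega, by omega⟩)).elim
      · exact (NZ _ _ _ _ _ _ _ _ hc' hb' hX hX1 (by unfold ZCond4; exact Or.inl ⟨by omega, by omega, by omega, by omega, by omega, by omega⟩)).elim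
      · exact (N3 _ _ _ _ _ _ hc' hX hX1 (by unfold S3Cond; exact Or.inl ⟨by omega, by omega, by omega, by omega⟩)).elim
      · exact (NZ _ _ _ _ _ _ _ _ hc' hb' hX hX1 (by unfold ZCond4; exact Or.inr (Or.inl ⟨by omega, by omega, by omega, by omega, by omega, by omega⟩))).elim
      · refine ⟨?_, ?_, ?_⟩ <;> omega
      · refine ⟨?_, ?_, ?_⟩ <;> omega
      · refine ⟨?_, ?_, ?_⟩ <;> omega
      · refine ⟨?_, ?_, ?_⟩ <;> omega
      · refine ⟨?_, ?_, ?_⟩ <;> omega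
      · exact (N3 _ _ _ _ _ _ hX hb' hc' (by unfold S3Cond; exact Or.inr (Or.inl ⟨by omega, by omega, by omega, by omega⟩))).elim
      · refine ⟨?_, ?_, ?_⟩ <;> omega
      · refine ⟨?_, ?_, ?_⟩ <;> omega
      · exact (N3 _ _ _ _ _ _ hX1 hb' hc' (by unfold S3Cond; exact Or.inr (Or.inl ⟨by omega, by omega, by omega, by omega⟩))).elim
      · exact (N3 _ _ _ _ _ _ hc' hb' hX (by unfold S3Cond; exact Or.inr (Or.inl ⟨by omega, by omega, by omega, by omega⟩))).elim
      · refine ⟨?_, ?_, ?_⟩ <;> omega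
      · refine ⟨?_, ?_, ?_⟩ <;> omega
      · exact (N3 _ _ _ _ _ _ hc' hb' hX1 (by unfold S3Cond; exact Or.inr (Or.inl ⟨by omega, by omega, by omega, by omega⟩))).elim
      · refine ⟨?_, ?_, ?_⟩ <;> omega
      · refine ⟨?_, ?_, ?_⟩ <;> omega

  have hT1 : ¬ (((x,y+1):Cell) ∈ P ∧ ((x,y-1):Cell) ∈ P) := by
    rintro ⟨h1, h2⟩; exact (N3 _ _ _ _ _ _ h2 hX h1 (by unfold S3Cond; exact Or.inr (Or.inl ⟨by omega, by omega, by omega, by omega⟩)))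
  have hT2 : ¬ (((x,y+1):Cell) ∈ P ∧ ((x+1,y-1):Cell) ∈ P) := by
    rintro ⟨h1, h2⟩; exact (NZ _ _ _ _ _ _ _ _ h2 hX1 hX h1 (by unfold ZCond4; exact Or.inr (Or.inr (Or.inr (⟨by omega, by omega, by omega, by omega, by omega, by omega⟩)))))
  have hT3 : ¬ (((x+1,y+1):Cell) ∈ P ∧ ((x,y-1):Cell) ∈ P) := by
    rintro ⟨h1, h2⟩; exact (NZ _ _ _ _ _ _ _ _ h2 hX hX1 h1 (by unfold ZCond4; exact Or.inr (Or.inr (Or.inl ⟨by omega, by omega, by omega, by omega, by omega, by omega⟩))))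
  have hT4 : ¬ (((x+1,y+1):Cell) ∈ P ∧ ((x+1,y-1):Cell) ∈ P) := by
    rintro ⟨h1, h2⟩; exact (N3 _ _ _ _ _ _ h2 hX1 h1 (by unfold S3Cond; exact Or.inr (Or.inl ⟨by omega, by omega, by omega, by omega⟩)))
  by_cases hT : ((x,y+1):Cell) ∈ P ∨ ((x+1,y+1):Cell) ∈ P
  · have hB1 : ((x,y-1):Cell) ∉ P := fun h => by
      rcases hT with ht|ht
      · exact hT1 ⟨ht, h⟩
      · exact hT3 ⟨ht, h⟩
    have hB2 : ((x+1,y-1):Cell) ∉ P := fun h => by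
      rcases hT with ht|ht
      · exact hT2 ⟨ht, h⟩
      · exact hT4 ⟨ht, h⟩
    have hsub : P ⊆ ({(x,y),(x+1,y),(x,y+1),(x+1,y+1)} : Set Cell) := by
      intro c hc
      have hbx := hbox c hc
      obtain ⟨c1, c2⟩ := c
      have u1 : c1 = x ∨ c1 = x + 1 := hbx.1
      have u2 : y - 1 ≤ c2 := hbx.2.1
      have u3 : c2 ≤ y + 1 := hbx.2.2
      have hc2 : c2 ≠ y - 1 := by
        rintro rfl
        rcases u1 with rfl|rfl
        · exact hB1 hc
        · exact hB2 hc
      simp only [Set.mem_insert_iff, Set.mem_singleton_iff, Prod.mk.injEq]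
      omega
    exact le_trans (Set.encard_mono hsub) (encard4 _ _ _ _)
  · push_neg at hT
    have hsub : P ⊆ ({(x,y),(x+1,y),(x,y-1),(x+1,y-1)} : Set Cell) := by
      intro c hc
      have hbx := hbox c hc
      obtain ⟨c1, c2⟩ := c
      have u1 : c1 = x ∨ c1 = x + 1 := hbx.1
      have u2 : y - 1 ≤ c2 := hbx.2.1
      have u3 : c2 ≤ y + 1 := hbx.2.2
      have hc2 : c2 ≠ y + 1 := by
        rintro rfl
        rcases u1 with rfl|rfl
        · exact hT.1 hc
        · exact hT.2 hc
      simp only [Set.mem_insert_iff, Set.mem_singleton_iff, Prod.mk.injEq]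
      omega
    exact le_trans (Set.encard_mono hsub) (encard4 _ _ _ _)

set_option maxHeartbeats 1000000 in
lemma mainV (hP : IsPolyomino P)
    (N3 : ∀ a1 a2 b1 b2 c1 c2 : ℤ, ((a1,a2):Cell) ∈ P → ((b1,b2):Cell) ∈ P →
      ((c1,c2):Cell) ∈ P → S3Cond a1 a2 b1 b2 c1 c2 → False)
    (NZ : ∀ a1 a2 b1 b2 c1 c2 d1 d2 : ℤ, ((a1,a2):Cell) ∈ P → ((b1,b2):Cell) ∈ P →
      ((c1,c2):Cell) ∈ P → ((d1,d2):Cell) ∈ P → ZCond4 a1 a2 b1 b2 c1 c2 d1 d2 → False)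
    {x y : ℤ} (hX : ((x,y):Cell) ∈ P) (hX1 : ((x,y+1):Cell) ∈ P) : P.encard ≤ 4 := by
  have hbox : ∀ c ∈ P, ((c.2 = y ∨ c.2 = y + 1) ∧ x - 1 ≤ c.1 ∧ c.1 ≤ x + 1) := by
    intro c hc
    have hpath := hP.2 _ hX _ hc
    clear hc
    induction hpath with
    | refl => exact ⟨Or.inl rfl, by change x - 1 ≤ x; omega, by change x ≤ x + 1; omega⟩
    | @tail b c hpa hstep ih =>
      obtain ⟨b1, b2⟩ := b
      obtain ⟨c1, c2⟩ := c
      obtain ⟨hb', hc', hadj⟩ := hstep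
      have hadj' : (b1 - c1).natAbs + (b2 - c2).natAbs = 1 := hadj
      have ih1 : b2 = y ∨ b2 = y + 1 := ih.1
      have ih2 : x - 1 ≤ b1 := ih.2.1
      have ih3 : b1 ≤ x + 1 := ih.2.2
      show (c2 = y ∨ c2 = y + 1) ∧ x - 1 ≤ c1 ∧ c1 ≤ x + 1
      have h4 : (c1 = b1 + 1 ∧ c2 = b2) ∨ (c1 = b1 - 1 ∧ c2 = b2) ∨
          (c1 = b1 ∧ c2 = b2 + 1) ∨ (c1 = b1 ∧ c2 = b2 - 1) := by omega
      have h3 : b1 = x - 1 ∨ b1 = x ∨ b1 = x + 1 := by omega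
      clear hadj hadj' ih ih2 ih3 hpa
      rcases h4 with ⟨rfl,rfl⟩|⟨rfl,rfl⟩|⟨rfl,rfl⟩|⟨rfl,rfl⟩ <;>
        rcases ih1 with rfl|rfl <;> rcases h3 with rfl|rfl|rfl

      · refine ⟨?_, ?_, ?_⟩ <;> omega
      · refine ⟨?_, ?_, ?_⟩ <;> omega
      · exact (N3 _ _ _ _ _ _ hX hb' hc' (by unfold S3Cond; exact Or.inl ⟨by omega, by omega, by omega, by omega⟩)).elim
      · refine ⟨?_, ?_, ?_⟩ <;> omega
      · refine ⟨?_, ?_, ?_⟩ <;> omega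
      · exact (N3 _ _ _ _ _ _ hX1 hb' hc' (by unfold S3Cond; exact Or.inl ⟨by omega, by omega, by omega, by omega⟩)).elim
      · exact (N3 _ _ _ _ _ _ hc' hb' hX (by unfold S3Cond; exact Or.inl ⟨by omega, by omega, by omega, by omega⟩)).elim
      · refine ⟨?_, ?_, ?_⟩ <;> omega
      · refine ⟨?_, ?_, ?_⟩ <;> omega
      · exact (N3 _ _ _ _ _ _ hc' hb' hX1 (by unfold S3Cond; exact Or.inl ⟨by omega, by omega, by omega, by omega⟩)).elim
      · refine ⟨?_, ?_, ?_⟩ <;> omega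
      · refine ⟨?_, ?_, ?_⟩ <;> omega
      · refine ⟨?_, ?_, ?_⟩ <;> omega
      · refine ⟨?_, ?_, ?_⟩ <;> omega
      · refine ⟨?_, ?_, ?_⟩ <;> omega
      · exact (NZ _ _ _ _ _ _ _ _ hX hX1 hb' hc' (by unfold ZCond4; exact Or.inr (Or.inr (Or.inr (⟨by omega, by omega, by omega, by omega, by omega, by omega⟩))))).elim
      · exact (N3 _ _ _ _ _ _ hX hX1 hc' (by unfold S3Cond; exact Or.inr (Or.inl ⟨by omega, by omega, by omega, by omega⟩))).elim
      · exact (NZ _ _ _ _ _ _ _ _ hX hX1 hb' hc' (by unfold ZCond4; exact Or.inr (Or.inr (Or.inl ⟨by omega, by omega, by omega, by omega, by omega, by omega⟩)))).elim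
      · exact (NZ _ _ _ _ _ _ _ _ hc' hb' hX hX1 (by unfold ZCond4; exact Or.inr (Or.inr (Or.inl ⟨by omega, by omega, by omega, by omega, by omega, by omega⟩)))).elim
      · exact (N3 _ _ _ _ _ _ hc' hX hX1 (by unfold S3Cond; exact Or.inr (Or.inl ⟨by omega, by omega, by omega, by omega⟩))).elim
      · exact (NZ _ _ _ _ _ _ _ _ hc' hb' hX hX1 (by unfold ZCond4; exact Or.inr (Or.inr (Or.inr (⟨by omega, by omega, by omega, by omega, by omega, by omega⟩))))).elim
      · refine ⟨?_, ?_, ?_⟩ <;> omega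
      · refine ⟨?_, ?_, ?_⟩ <;> omega
      · refine ⟨?_, ?_, ?_⟩ <;> omega

  have hT1 : ¬ (((x+1,y):Cell) ∈ P ∧ ((x-1,y):Cell) ∈ P) := by
    rintro ⟨h1, h2⟩; exact (N3 _ _ _ _ _ _ h2 hX h1 (by unfold S3Cond; exact Or.inl ⟨by omega, by omega, by omega, by omega⟩))
  have hT2 : ¬ (((x+1,y):Cell) ∈ P ∧ ((x-1,y+1):Cell) ∈ P) := by
    rintro ⟨h1, h2⟩; exact (NZ _ _ _ _ _ _ _ _ h2 hX1 hX h1 (by unfold ZCond4; exact Or.inr (Or.inl ⟨by omega, by omega, by omega, by omega, by omega, by omega⟩)))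
  have hT3 : ¬ (((x+1,y+1):Cell) ∈ P ∧ ((x-1,y):Cell) ∈ P) := by
    rintro ⟨h1, h2⟩; exact (NZ _ _ _ _ _ _ _ _ h2 hX hX1 h1 (by unfold ZCond4; exact Or.inl ⟨by omega, by omega, by omega, by omega, by omega, by omega⟩))
  have hT4 : ¬ (((x+1,y+1):Cell) ∈ P ∧ ((x-1,y+1):Cell) ∈ P) := by
    rintro ⟨h1, h2⟩; exact (N3 _ _ _ _ _ _ h2 hX1 h1 (by unfold S3Cond; exact Or.inl ⟨by omega, by omega, by omega, by omega⟩))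
  by_cases hT : ((x+1,y):Cell) ∈ P ∨ ((x+1,y+1):Cell) ∈ P
  · have hB1 : ((x-1,y):Cell) ∉ P := fun h => by
      rcases hT with ht|ht
      · exact hT1 ⟨ht, h⟩
      · exact hT3 ⟨ht, h⟩
    have hB2 : ((x-1,y+1):Cell) ∉ P := fun h => by
      rcases hT with ht|ht
      · exact hT2 ⟨ht, h⟩
      · exact hT4 ⟨ht, h⟩
    have hsub : P ⊆ ({(x,y),(x,y+1),(x+1,y),(x+1,y+1)} : Set Cell) := by
      intro c hc
      have hbx := hbox c hc
      obtain ⟨c1, c2⟩ := c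
      have u1 : c2 = y ∨ c2 = y + 1 := hbx.1
      have u2 : x - 1 ≤ c1 := hbx.2.1
      have u3 : c1 ≤ x + 1 := hbx.2.2
      have hc1 : c1 ≠ x - 1 := by
        rintro rfl
        rcases u1 with rfl|rfl
        · exact hB1 hc
        · exact hB2 hc
      simp only [Set.mem_insert_iff, Set.mem_singleton_iff, Prod.mk.injEq]
      omega
    exact le_trans (Set.encard_mono hsub) (encard4 _ _ _ _)
  · push_neg at hT
    have hsub : P ⊆ ({(x,y),(x,y+1),(x-1,y),(x-1,y+1)} : Set Cell) := by
      intro c hc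
      have hbx := hbox c hc
      obtain ⟨c1, c2⟩ := c
      have u1 : c2 = y ∨ c2 = y + 1 := hbx.1
      have u2 : x - 1 ≤ c1 := hbx.2.1
      have u3 : c1 ≤ x + 1 := hbx.2.2
      have hc1 : c1 ≠ x + 1 := by
        rintro rfl
        rcases u1 with rfl|rfl
        · exact hT.1 hc
        · exact hT.2 hc
      simp only [Set.mem_insert_iff, Set.mem_singleton_iff, Prod.mk.injEq]
      omega
    exact le_trans (Set.encard_mono hsub) (encard4 _ _ _ _)

end Aux

/-- every polyomino with at least 5 cells contains a subset congruent to
the straight tromino `S_3` or a subset congruent to the S-tetromino `Z_2`. -/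
theorem stmt13 (P : Set Cell) (hP : IsPolyomino P) (h5 : 5 ≤ P.encard) :
    Ancestor (Srow 3) P ∨ Ancestor Z2 P := by
  by_contra hcon
  push_neg at hcon
  obtain ⟨hS, hZ⟩ := hcon
  have N3 := killS3 hS
  have NZ := killZ hZ
  obtain ⟨⟨a1, a2⟩, haP⟩ := hP.1
  have h2 : ∃ b ∈ P, b ≠ ((a1, a2) : Cell) := by
    by_contra h
    push_neg at h
    have hsub : P ⊆ {((a1,a2) : Cell)} := fun b hb => h b hb
    have := le_trans h5 (le_trans (Set.encard_mono hsub) (by rw [Set.encard_singleton]))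
    norm_num at this
  obtain ⟨b, hbP, hne⟩ := h2
  have hpath := hP.2 _ haP _ hbP
  rcases hpath.cases_head with heq | ⟨c, ⟨_, hcP, hadj⟩, _⟩
  · exact hne heq.symm
  obtain ⟨c1, c2⟩ := c
  have hadj' : (a1 - c1).natAbs + (a2 - c2).natAbs = 1 := hadj
  have hle : P.encard ≤ 4 := by
    have h4 : (c1 = a1 + 1 ∧ c2 = a2) ∨ (a1 = c1 + 1 ∧ c2 = a2) ∨
        (c2 = a2 + 1 ∧ c1 = a1) ∨ (a2 = c2 + 1 ∧ c1 = a1) := by omega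
    rcases h4 with ⟨rfl, rfl⟩ | ⟨rfl, rfl⟩ | ⟨rfl, rfl⟩ | ⟨rfl, rfl⟩
    · exact mainH hP N3 NZ haP hcP
    · exact mainH hP N3 NZ hcP haP
    · exact mainV hP N3 NZ haP hcP
    · exact mainV hP N3 NZ hcP haP
  have : (5 : ℕ∞) ≤ 4 := le_trans h5 hle
  norm_num at this
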